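/- Suppose σ̃ < Φ̄. Let x₂ be the unique positive root of tanh(x)/x = σ̃/Φ* and let x̄ = ((tanh/id)⁻¹(σ̃/Φ̄))·e^{−μ(Φ*−σ̃)T}. Then x̄ < x₂, and the time-T solution map F(ρ₀) = ρ(T; ρ₀) of the ODE ρ' = μρ[Φ(t)·tanh(ρ)/ρ − σ̃] maps the interval [x̄, x₂] into itself. -/

import Mathlib

open Real Set

lemma tanh_hasDerivAt (x : ℝ) :
    HasDerivAt Real.tanh ((Real.cosh x ^ 2)⁻¹) x := by
  have h : HasDerivAt (fun y => Real.sinh y / Real.cosh y)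
      ((Real.cosh x * Real.cosh x - Real.sinh x * Real.sinh x) / (Real.cosh x ^ 2)) x :=
    (Real.hasDerivAt_sinh x).div (Real.hasDerivAt_cosh x) (ne_of_gt (Real.cosh_pos x))
  have e : (Real.cosh x * Real.cosh x - Real.sinh x * Real.sinh x) / (Real.cosh x ^ 2)
      = (Real.cosh x ^ 2)⁻¹ := by
    rw [← sq, ← sq, Real.cosh_sq_sub_sinh_sq, one_div]
  rw [e] at h
  exact h.congr_of_eventuallyEq
    (Filter.Eventually.of_forall fun y => Real.tanh_eq_sinh_div_cosh y)

lemma continuous_tanh' : Continuous Real.tanh :=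
  continuous_iff_continuousAt.2 fun x => (tanh_hasDerivAt x).continuousAt

lemma tanh_pos' {x : ℝ} (hx : 0 < x) : 0 < Real.tanh x := by
  rw [Real.tanh_eq_sinh_div_cosh]
  exact div_pos (Real.sinh_pos_iff.2 hx) (Real.cosh_pos x)

lemma tanh_div_strictAntiOn : StrictAntiOn (fun x => Real.tanh x / x) (Set.Ioi (0:ℝ)) := by
  apply strictAntiOn_of_deriv_neg (convex_Ioi 0)
  · exact ContinuousOn.div continuous_tanh'.continuousOn continuousOn_id
      (fun x hx => ne_of_gt hx)
  · intro x hx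
    rw [interior_Ioi] at hx
    have hx' : (0:ℝ) < x := hx
    have hd : HasDerivAt (fun y => Real.tanh y / y)
        (((Real.cosh x ^ 2)⁻¹ * x - Real.tanh x * 1) / x ^ 2) x :=
      (tanh_hasDerivAt x).div (hasDerivAt_id x) (ne_of_gt hx')
    rw [hd.deriv]
    apply div_neg_of_neg_of_pos _ (by positivity)
    have h1 : Real.tanh x = Real.sinh x / Real.cosh x := Real.tanh_eq_sinh_div_cosh x
    have h2 : x < Real.sinh x := Real.self_lt_sinh_iff.2 hx'
    have h3 : 1 ≤ Real.cosh x := Real.one_le_cosh x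
    have h4 : 0 < Real.cosh x := Real.cosh_pos x
    have h5 : 0 < Real.sinh x := Real.sinh_pos_iff.2 hx'
    rw [h1, mul_one, sub_neg, inv_mul_eq_div, div_lt_div_iff₀ (by positivity) h4]
    nlinarith [mul_lt_mul_of_pos_right h2 h4, mul_le_mul_of_nonneg_left (mul_le_mul_of_nonneg_right h3 (le_of_lt h4)) (le_of_lt h5)]

lemma barrier_upper (f f' : ℝ → ℝ) (c Tt : ℝ)
    (hder : ∀ t, 0 ≤ t → HasDerivAt f (f' t) t)
    (hneg : ∀ t ∈ Set.Icc 0 Tt, c < f t → f' t < 0)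
    (h0 : f 0 ≤ c) : ∀ t ∈ Set.Icc (0:ℝ) Tt, f t ≤ c := by
  intro t₀ ht₀
  by_contra hgt
  push_neg at hgt
  have hcont : ContinuousOn f (Set.Ici 0) :=
    fun x hx => ((hder x hx).continuousAt).continuousWithinAt
  have hS : IsClosed (Set.Icc 0 t₀ ∩ f ⁻¹' Set.Iic c) :=
    ContinuousOn.preimage_isClosed_of_isClosed
      (hcont.mono (Set.Icc_subset_Ici_self)) isClosed_Icc isClosed_Iic
  set S := Set.Icc 0 t₀ ∩ f ⁻¹' Set.Iic c with hSdef
  have h0S : (0:ℝ) ∈ S := ⟨⟨le_refl 0, ht₀.1⟩, h0⟩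
  have hbdd : BddAbove S := BddAbove.mono Set.inter_subset_left (bddAbove_Icc)
  set s := sSup S with hsdef
  have hsS : s ∈ S := hS.csSup_mem ⟨0, h0S⟩ hbdd
  have hs0 : 0 ≤ s := hsS.1.1
  have hst₀ : s ≤ t₀ := hsS.1.2
  have hfs : f s ≤ c := hsS.2
  have hslt : s < t₀ := lt_of_le_of_ne hst₀ (fun h => absurd hfs (by rw [h]; exact not_le.2 hgt))
  have hopen : ∀ x ∈ Set.Ioc s t₀, c < f x := by
    intro x hx
    by_contra hle
    push_neg at hle
    exact absurd (le_csSup hbdd (⟨⟨hs0.trans hx.1.le, hx.2⟩, hle⟩ : x ∈ S)) (not_le.2 hx.1)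
  have hanti : StrictAntiOn f (Set.Icc s t₀) := by
    apply strictAntiOn_of_deriv_neg (convex_Icc s t₀)
    · exact hcont.mono (fun x hx => hs0.trans hx.1)
    · intro x hx
      rw [interior_Icc] at hx
      rw [(hder x (hs0.trans hx.1.le)).deriv]
      exact hneg x ⟨hs0.trans hx.1.le, hx.2.le.trans ht₀.2⟩ (hopen x ⟨hx.1, hx.2.le⟩)
  have := hanti (Set.left_mem_Icc.2 hslt.le) (Set.right_mem_Icc.2 hslt.le) hslt
  linarith

lemma log_ge_integral (ρ ρ' g : ℝ → ℝ) (a b : ℝ) (ha : 0 ≤ a) (hab : a ≤ b)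
    (hg : Continuous g)
    (hρpos : ∀ t, 0 ≤ t → 0 < ρ t)
    (hder : ∀ t, 0 ≤ t → HasDerivAt ρ (ρ' t) t)
    (hineq : ∀ t ∈ Set.Ioo a b, g t * ρ t ≤ ρ' t) :
    Real.log (ρ a) + ∫ t in a..b, g t ≤ Real.log (ρ b) := by
  set G : ℝ → ℝ := fun u => ∫ x in (0:ℝ)..u, g x with hG
  have hGd : ∀ u, HasDerivAt G (g u) u := fun u =>
    (hg.integral_hasStrictDerivAt 0 u).hasDerivAt
  set h : ℝ → ℝ := fun t => Real.log (ρ t) - G t with hh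
  have hhd : ∀ t, 0 ≤ t → HasDerivAt h (ρ' t / ρ t - g t) t := by
    intro t ht
    exact ((hder t ht).log (ne_of_gt (hρpos t ht))).sub (hGd t)
  have hmono : MonotoneOn h (Set.Icc a b) := by
    apply monotoneOn_of_deriv_nonneg (convex_Icc a b)
    · intro x hx
      exact ((hhd x (ha.trans hx.1)).continuousAt).continuousWithinAt
    · intro x hx
      rw [interior_Icc] at hx
      exact ((hhd x (ha.trans hx.1.le)).differentiableAt).differentiableWithinAt
    · intro x hx
      rw [interior_Icc] at hx
      have hx0 : (0:ℝ) ≤ x := ha.trans hx.1.le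
      rw [(hhd x hx0).deriv]
      have hρx : 0 < ρ x := hρpos x hx0
      have := hineq x hx
      rw [sub_nonneg, le_div_iff₀ hρx]
      linarith
  have hab' := hmono (Set.left_mem_Icc.2 hab) (Set.right_mem_Icc.2 hab) hab
  have hsplit : G b = G a + ∫ t in a..b, g t := by
    rw [hG]
    exact (intervalIntegral.integral_add_adjacent_intervals
      (hg.intervalIntegrable 0 a) (hg.intervalIntegrable a b)).symm
  simp only [hh] at hab'
  rw [hsplit] at hab'
  linarith


lemma tanh_div_antitone {u v : ℝ} (hu : 0 < u) (huv : u ≤ v) :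
    Real.tanh v / v ≤ Real.tanh u / u := by
  rcases eq_or_lt_of_le huv with h | h
  · rw [h]
  · exact (tanh_div_strictAntiOn hu (hu.trans h) h).le

theorem time_T_map_invariant_interval (μ σt T Φbar Φstar x₂ xbar' : ℝ)
    (hμ : 0 < μ) (hσt : 0 < σt) (hT : 0 < T)
    (Φ : ℝ → ℝ) (hΦc : Continuous Φ) (hΦpos : ∀ t, 0 < Φ t)
    (hΦper : Function.Periodic Φ T)
    (hΦbar : Φbar = (1 / T) * ∫ t in (0:ℝ)..T, Φ t)
    (hΦstar : IsGreatest (Φ '' Set.Icc 0 T) Φstar)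
    (hmean : σt < Φbar)
    (hx₂pos : 0 < x₂) (hx₂ : Real.tanh x₂ / x₂ = σt / Φstar)
    (hxbar'pos : 0 < xbar') (hxbar' : Real.tanh xbar' / xbar' = σt / Φbar) :
    xbar' * Real.exp (-μ * (Φstar - σt) * T) < x₂ ∧
    ∀ ρ : ℝ → ℝ,
      (∀ t, 0 ≤ t → 0 < ρ t) →
      (∀ t, 0 ≤ t →
        HasDerivAt ρ (μ * ρ t * (Φ t * (Real.tanh (ρ t) / ρ t) - σt)) t) →
      ρ 0 ∈ Set.Icc (xbar' * Real.exp (-μ * (Φstar - σt) * T)) x₂ →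
      ρ T ∈ Set.Icc (xbar' * Real.exp (-μ * (Φstar - σt) * T)) x₂ := by
  have hΦb : 0 < Φbar := hσt.trans hmean
  have hΦle : ∀ t ∈ Set.Icc 0 T, Φ t ≤ Φstar := fun t ht => hΦstar.2 ⟨t, ht, rfl⟩
  have hΦsp : 0 < Φstar := (hΦpos 0).trans_le (hΦle 0 ⟨le_refl 0, hT.le⟩)
  have hΦint : ∫ t in (0:ℝ)..T, Φ t = T * Φbar := by
    rw [hΦbar]; field_simp
  have hbs : Φbar ≤ Φstar := by
    have h1 : ∫ t in (0:ℝ)..T, Φ t ≤ ∫ t in (0:ℝ)..T, Φstar := by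
      apply intervalIntegral.integral_mono_on hT.le (hΦc.intervalIntegrable 0 T)
        (intervalIntegrable_const)
      exact hΦle
    rw [hΦint, intervalIntegral.integral_const, smul_eq_mul, sub_zero] at h1
    exact le_of_mul_le_mul_left (by linarith) hT
  have hσs : σt < Φstar := hmean.trans_le hbs
  have hexp1 : Real.exp (-μ * (Φstar - σt) * T) < 1 := by
    rw [Real.exp_lt_one_iff]
    have h : 0 < μ * (Φstar - σt) * T := mul_pos (mul_pos hμ (sub_pos.2 hσs)) hT
    linarith
  have hxx : xbar' ≤ x₂ := by
    by_contra h
    push_neg at h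
    have h1 : Real.tanh xbar' / xbar' < Real.tanh x₂ / x₂ :=
      tanh_div_strictAntiOn (Set.mem_Ioi.2 hx₂pos) (Set.mem_Ioi.2 hxbar'pos) h
    rw [hx₂, hxbar'] at h1
    have h2 : σt / Φstar ≤ σt / Φbar := div_le_div_of_nonneg_left hσt.le hΦb hbs
    linarith
  set xbar := xbar' * Real.exp (-μ * (Φstar - σt) * T) with hxbardef
  have hxbarpos : 0 < xbar := by positivity
  have hxbarlt : xbar < x₂ :=
    lt_of_lt_of_le (mul_lt_of_lt_one_right hxbar'pos hexp1) hxx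
  refine ⟨hxbarlt, ?_⟩
  intro ρ hρpos hρder hρ0
  -- Upper bound
  have hupper : ∀ t ∈ Set.Icc (0:ℝ) T, ρ t ≤ x₂ := by
    apply barrier_upper ρ
      (fun t => μ * ρ t * (Φ t * (Real.tanh (ρ t) / ρ t) - σt)) x₂ T hρder _ hρ0.2
    intro t ht hgt
    have hρt : 0 < ρ t := hρpos t ht.1
    have htanh : Real.tanh (ρ t) / ρ t < σt / Φstar := by
      rw [← hx₂]
      exact tanh_div_strictAntiOn (Set.mem_Ioi.2 hx₂pos) (Set.mem_Ioi.2 (hx₂pos.trans hgt)) hgt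
    have htp : 0 < Real.tanh (ρ t) / ρ t := div_pos (tanh_pos' hρt) hρt
    have h1 : Φ t * (Real.tanh (ρ t) / ρ t) < σt := by
      calc Φ t * (Real.tanh (ρ t) / ρ t) ≤ Φstar * (Real.tanh (ρ t) / ρ t) :=
            mul_le_mul_of_nonneg_right (hΦle t ht) htp.le
        _ < Φstar * (σt / Φstar) := mul_lt_mul_of_pos_left htanh hΦsp
        _ = σt := mul_div_cancel₀ σt (ne_of_gt hΦsp)
    have h2 : (0:ℝ) < μ * ρ t := by positivity
    exact mul_neg_of_pos_of_neg h2 (by linarith)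
  -- Lower bound setup
  obtain ⟨c, hcΦ, hcpos, hcle⟩ : ∃ c : ℝ, c * Φbar = μ * σt ∧ 0 < c ∧ c ≤ μ := by
    refine ⟨μ * σt / Φbar, div_mul_cancel₀ _ (ne_of_gt hΦb), by positivity, ?_⟩
    rw [div_le_iff₀ hΦb]
    nlinarith
  have hgc : Continuous (fun t => c * Φ t - μ * σt) :=
    (continuous_const.mul hΦc).sub continuous_const
  have hgint : ∀ a : ℝ, (∫ t in a..T, (c * Φ t - μ * σt)) =
      c * (∫ t in a..T, Φ t) - μ * σt * (T - a) := by
    intro a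
    rw [intervalIntegral.integral_sub (f := fun t => c * Φ t) (g := fun _ => μ * σt) ((continuous_const.mul hΦc).intervalIntegrable a T)
      (intervalIntegrable_const), intervalIntegral.integral_const_mul,
      intervalIntegral.integral_const, smul_eq_mul, mul_comm (T - a)]
  have hkey : ∀ a ∈ Set.Icc (0:ℝ) T, (∀ t ∈ Set.Ioo a T, ρ t ≤ xbar') →
      Real.log (ρ a) + (∫ t in a..T, (c * Φ t - μ * σt)) ≤ Real.log (ρ T) := by
    intro a ha hbound
    apply log_ge_integral ρ
      (fun t => μ * ρ t * (Φ t * (Real.tanh (ρ t) / ρ t) - σt))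
      (fun t => c * Φ t - μ * σt) a T ha.1 ha.2 hgc hρpos hρder
    intro t ht
    have ht0 : (0:ℝ) ≤ t := ha.1.trans ht.1.le
    have hρt : 0 < ρ t := hρpos t ht0
    have htanh : σt / Φbar ≤ Real.tanh (ρ t) / ρ t := by
      rw [← hxbar']
      exact tanh_div_antitone hρt (hbound t ht)
    have hΦt := hΦpos t
    have h3 : μ * Φ t * (σt / Φbar) = c * Φ t := by
      field_simp
      linear_combination -hcΦ
    have h5 : μ * Φ t * (σt / Φbar) ≤ μ * Φ t * (Real.tanh (ρ t) / ρ t) :=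
      mul_le_mul_of_nonneg_left htanh (mul_nonneg hμ.le hΦt.le)
    have h4 : c * Φ t - μ * σt ≤ μ * (Φ t * (Real.tanh (ρ t) / ρ t) - σt) := by
      rw [mul_sub, ← mul_assoc, ← h3]
      linarith
    have h6 := mul_le_mul_of_nonneg_right h4 hρt.le
    calc (c * Φ t - μ * σt) * ρ t
        ≤ μ * (Φ t * (Real.tanh (ρ t) / ρ t) - σt) * ρ t := h6
      _ = μ * ρ t * (Φ t * (Real.tanh (ρ t) / ρ t) - σt) := by ring
  have hρTpos : 0 < ρ T := hρpos T hT.le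
  have hcontρ : ContinuousOn ρ (Set.Icc 0 T) :=
    fun x hx => ((hρder x hx.1).continuousAt).continuousWithinAt
  have hlower : xbar ≤ ρ T := by
    by_cases hne : ∃ t ∈ Set.Icc (0:ℝ) T, xbar' ≤ ρ t
    · -- some time reaches xbar'
      have hSclosed : IsClosed (Set.Icc 0 T ∩ ρ ⁻¹' Set.Ici xbar') :=
        ContinuousOn.preimage_isClosed_of_isClosed hcontρ isClosed_Icc isClosed_Ici
      obtain ⟨t₁, ht₁, ht₁'⟩ := hne
      have hSne : (Set.Icc 0 T ∩ ρ ⁻¹' Set.Ici xbar').Nonempty := ⟨t₁, ht₁, ht₁'⟩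
      have hbdd : BddAbove (Set.Icc 0 T ∩ ρ ⁻¹' Set.Ici xbar') :=
        BddAbove.mono Set.inter_subset_left bddAbove_Icc
      set s := sSup (Set.Icc 0 T ∩ ρ ⁻¹' Set.Ici xbar') with hsdef
      have hsS : s ∈ Set.Icc 0 T ∩ ρ ⁻¹' Set.Ici xbar' := hSclosed.csSup_mem hSne hbdd
      have hsIcc : s ∈ Set.Icc (0:ℝ) T := hsS.1
      have hρs : xbar' ≤ ρ s := hsS.2
      have hboundIoo : ∀ t ∈ Set.Ioo s T, ρ t ≤ xbar' := by
        intro t ht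
        by_contra hle
        push_neg at hle
        exact absurd (le_csSup hbdd ⟨⟨hsIcc.1.trans ht.1.le, ht.2.le⟩, hle.le⟩)
          (not_le.2 ht.1)
      have hk := hkey s hsIcc hboundIoo
      have hsplitΦ : (∫ t in (0:ℝ)..s, Φ t) + (∫ t in s..T, Φ t) = T * Φbar := by
        rw [← hΦint]
        exact intervalIntegral.integral_add_adjacent_intervals
          (hΦc.intervalIntegrable 0 s) (hΦc.intervalIntegrable s T)
      have hΦ0s : (∫ t in (0:ℝ)..s, Φ t) ≤ s * Φstar := by
        have h1 : (∫ t in (0:ℝ)..s, Φ t) ≤ ∫ t in (0:ℝ)..s, Φstar := by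
          apply intervalIntegral.integral_mono_on hsIcc.1 (hΦc.intervalIntegrable 0 s)
            intervalIntegrable_const
          exact fun x hx => hΦle x ⟨hx.1, hx.2.trans hsIcc.2⟩
        rw [intervalIntegral.integral_const, smul_eq_mul, sub_zero] at h1
        exact h1
      have hq : T * Φbar - s * Φstar ≤ ∫ t in s..T, Φ t := by linarith
      have hintb : -(μ * (Φstar - σt) * T) ≤ ∫ t in s..T, (c * Φ t - μ * σt) := by
        rw [hgint s]
        have hs0 : 0 ≤ s := hsIcc.1
        have hsT : s ≤ T := hsIcc.2
        have hA : c * (T * Φbar - s * Φstar) ≤ c * (∫ t in s..T, Φ t) :=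
          mul_le_mul_of_nonneg_left hq hcpos.le
        have hB : c * (T * Φbar) = μ * σt * T := by
          rw [show c * (T * Φbar) = c * Φbar * T by ring, hcΦ]
        have hC : 0 ≤ (μ - c) * s * Φstar :=
          mul_nonneg (mul_nonneg (sub_nonneg.2 hcle) hs0) hΦsp.le
        have hD : 0 ≤ μ * (T - s) * (Φstar - σt) :=
          mul_nonneg (mul_nonneg hμ.le (sub_nonneg.2 hsT)) (sub_nonneg.2 hσs.le)
        nlinarith [hA, hB, hC, hD]
      have hlogs : Real.log xbar' ≤ Real.log (ρ s) :=
        (Real.log_le_log_iff hxbar'pos (hρpos s hsIcc.1)).2 hρs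
      have hlogxbar : Real.log xbar = Real.log xbar' + -μ * (Φstar - σt) * T := by
        rw [hxbardef, Real.log_mul (ne_of_gt hxbar'pos) (ne_of_gt (Real.exp_pos _)),
          Real.log_exp]
      have hfin : Real.log xbar ≤ Real.log (ρ T) := by
        rw [hlogxbar]
        linarith [hk, hintb, hlogs]
      exact (Real.log_le_log_iff hxbarpos hρTpos).1 hfin
    · push_neg at hne
      have hbound : ∀ t ∈ Set.Ioo (0:ℝ) T, ρ t ≤ xbar' :=
        fun t ht => (hne t ⟨ht.1.le, ht.2.le⟩).le
      have hk := hkey 0 ⟨le_refl 0, hT.le⟩ hbound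
      have hint0 : (∫ t in (0:ℝ)..T, (c * Φ t - μ * σt)) = 0 := by
        rw [hgint 0, hΦint]
        linear_combination T * hcΦ
      rw [hint0, add_zero] at hk
      calc xbar ≤ ρ 0 := hρ0.1
        _ ≤ ρ T := (Real.log_le_log_iff (hρpos 0 (le_refl 0)) hρTpos).1 hk
  exact ⟨hlower, hupper T ⟨hT.le, le_refl T⟩⟩
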